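/- arXiv:math/0608503 — 4 statements merged into one kernel-verified Lean document; each statement's English description precedes it below -/
import Mathlib

section
/- Let p : 𝐄 ⥤ 𝐁 be a structure on 𝐁 (faithful, lifting isomorphisms, with skeletal fibers), let B be an object of 𝐁 and E', E'' objects with p(E') = B = p(E''). Then the following are equivalent: (a) E' = E''; (b) for every object E of 𝐄, the image of Hom_𝐄(E, E') under p equals the image of Hom_𝐄(E, E'') under p (both being subsets of Hom_𝐁(p(E), B)); (c) for every object E, the image of Hom_𝐄(E', E) under p equals the image of Hom_𝐄(E'', E) under p; (d) for every object E with p(E) = B, the set of vertical morphisms E ⟶ E' is nonempty iff the set of vertical morphisms E ⟶ E'' is nonempty; (e) for every object E with p(E) = B, the set of vertical morphisms E' ⟶ E is nonempty iff the set of vertical morphisms E'' ⟶ E is nonempty. -/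
open CategoryTheory

universe v₁ u₁ v₂ u₂

variable {𝒳 : Type u₁} {𝒮 : Type u₂} [Category.{v₁} 𝒳] [Category.{v₂} 𝒮]

/-- A structure (of type `𝒳`) on `𝒮`: a faithful functor which lifts isomorphisms and has
skeletal fibers. -/
structure IsCatStruct (p : 𝒳 ⥤ 𝒮) : Prop where
  faithful : ∀ {X Y : 𝒳} (f g : X ⟶ Y), p.map f = p.map g → f = g
  liftIso : ∀ (e : 𝒳) (b' : 𝒮) (f : b' ≅ p.obj e),
    ∃ (e' : 𝒳) (h : p.obj e' = b') (φ : e' ≅ e), p.map φ.hom = eqToHom h ≫ f.hom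
  skeletalFibers : ∀ (X Y : 𝒳) (h : p.obj X = p.obj Y) (φ : X ≅ Y),
    p.map φ.hom = eqToHom h → X = Y

lemma eq_of_vertical_pair (p : 𝒳 ⥤ 𝒮) (hp : IsCatStruct p) {E' E'' : 𝒳}
    (h : p.obj E' = p.obj E'') (φ : E' ⟶ E'') (ψ : E'' ⟶ E')
    (hφ : p.map φ = eqToHom h) (hψ : p.map ψ = eqToHom h.symm) : E' = E'' := by
  have h1 : φ ≫ ψ = 𝟙 E' := by
    apply hp.faithful
    simp [hφ, hψ]
  have h2 : ψ ≫ φ = 𝟙 E'' := by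
    apply hp.faithful
    simp [hφ, hψ]
  exact hp.skeletalFibers E' E'' h ⟨φ, ψ, h1, h2⟩ hφ

/-- For a structure `p` on `𝒮` and objects `E', E''` in the fiber over `B`, the following
are equivalent: (a) `E' = E''`; (b) the `p`-images of `Hom(E, E')` and `Hom(E, E'')`
coincide in `Hom(p E, B)` for every `E`; (c) dually for hom-sets out of `E', E''`;
(d) existence of vertical morphisms into `E'` and into `E''` agree on the fiber;
(e) existence of vertical morphisms out of `E'` and out of `E''` agree on the fiber. -/
theorem struct_fiber_object_eq_tfae (p : 𝒳 ⥤ 𝒮) (hp : IsCatStruct p)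
    {B : 𝒮} {E' E'' : 𝒳} (hE' : p.obj E' = B) (hE'' : p.obj E'' = B) :
    ((E' = E'') ↔ ∀ E : 𝒳,
        {u : p.obj E ⟶ B | ∃ φ : E ⟶ E', p.map φ ≫ eqToHom hE' = u} =
        {u : p.obj E ⟶ B | ∃ φ : E ⟶ E'', p.map φ ≫ eqToHom hE'' = u}) ∧
    ((E' = E'') ↔ ∀ E : 𝒳,
        {u : B ⟶ p.obj E | ∃ φ : E' ⟶ E, eqToHom hE'.symm ≫ p.map φ = u} =
        {u : B ⟶ p.obj E | ∃ φ : E'' ⟶ E, eqToHom hE''.symm ≫ p.map φ = u}) ∧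
    ((E' = E'') ↔ ∀ (E : 𝒳) (h : p.obj E = B),
        ((∃ φ : E ⟶ E', p.map φ = eqToHom (h.trans hE'.symm)) ↔
          (∃ φ : E ⟶ E'', p.map φ = eqToHom (h.trans hE''.symm)))) ∧
    ((E' = E'') ↔ ∀ (E : 𝒳) (h : p.obj E = B),
        ((∃ φ : E' ⟶ E, p.map φ = eqToHom (hE'.trans h.symm)) ↔
          (∃ φ : E'' ⟶ E, p.map φ = eqToHom (hE''.trans h.symm)))) := by
  have hEE : p.obj E' = p.obj E'' := hE'.trans hE''.symm
  refine ⟨⟨?_, ?_⟩, ⟨?_, ?_⟩, ⟨?_, ?_⟩, ⟨?_, ?_⟩⟩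
  · rintro rfl E; rfl
  · intro h
    have h1 : eqToHom hE' ∈ {u : p.obj E' ⟶ B | ∃ φ : E' ⟶ E'', p.map φ ≫ eqToHom hE'' = u} := by
      rw [← h E']; exact ⟨𝟙 E', by simp⟩
    have h2 : eqToHom hE'' ∈ {u : p.obj E'' ⟶ B | ∃ φ : E'' ⟶ E', p.map φ ≫ eqToHom hE' = u} := by
      rw [h E'']; exact ⟨𝟙 E'', by simp⟩
    obtain ⟨φ, hφ⟩ := h1
    obtain ⟨ψ, hψ⟩ := h2
    rw [comp_eqToHom_iff] at hφ hψ
    refine eq_of_vertical_pair p hp hEE φ ψ ?_ ?_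
    · rw [hφ]; simp
    · rw [hψ]; simp
  · rintro rfl E; rfl
  · intro h
    have h1 : eqToHom hE''.symm ∈
        {u : B ⟶ p.obj E'' | ∃ φ : E' ⟶ E'', eqToHom hE'.symm ≫ p.map φ = u} := by
      rw [h E'']; exact ⟨𝟙 E'', by simp⟩
    have h2 : eqToHom hE'.symm ∈
        {u : B ⟶ p.obj E' | ∃ φ : E'' ⟶ E', eqToHom hE''.symm ≫ p.map φ = u} := by
      rw [← h E']; exact ⟨𝟙 E', by simp⟩
    obtain ⟨φ, hφ⟩ := h1
    obtain ⟨ψ, hψ⟩ := h2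
    rw [eqToHom_comp_iff] at hφ hψ
    refine eq_of_vertical_pair p hp hEE φ ψ ?_ ?_
    · rw [hφ]; simp
    · rw [hψ]; simp
  · rintro rfl E h; rfl
  · intro h
    obtain ⟨φ, hφ⟩ := (h E' hE').mp ⟨𝟙 E', by simp⟩
    obtain ⟨ψ, hψ⟩ := (h E'' hE'').mpr ⟨𝟙 E'', by simp⟩
    exact eq_of_vertical_pair p hp hEE φ ψ hφ hψ
  · rintro rfl E h; rfl
  · intro h
    obtain ⟨φ, hφ⟩ := (h E'' hE'').mpr ⟨𝟙 E'', by simp⟩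
    obtain ⟨ψ, hψ⟩ := (h E' hE').mp ⟨𝟙 E', by simp⟩
    exact eq_of_vertical_pair p hp hEE φ ψ hφ hψ
end

section
/- Let 𝐂 be a category with binary products and U : 𝐂 ⥤ Type a faithful functor that preserves binary products. If f : U(W) → Hom_𝐂(Y, Z) and g : U(W) → Hom_𝐂(X, Y) are generalized elements, then their pointwise composite w ↦ (g(w) ≫ f(w)) : U(W) → Hom_𝐂(X, Z) is a generalized element; moreover, for every object X, the constant function U(W) → Hom_𝐂(X, X), w ↦ 𝟙 X, is a generalized element. (Hence the hom-sets of 𝐂 are enriched in presheaves of generalized elements.) -/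
open CategoryTheory CategoryTheory.Limits

universe w v u

variable {C : Type u} [Category.{v} C] [HasBinaryProducts C]

/-- `f : U(Z) → Hom(X, Y)` is a generalized element of `Hom(X, Y)` with domain `U(Z)`:
there is `h : Z ⨯ X ⟶ Y` in `C` lifting the evaluation of `f`. -/
def IsGenElt (U : C ⥤ Type w) {X Y Z : C} (f : U.obj Z → (X ⟶ Y)) : Prop :=
  ∃ h : (Z ⨯ X : C) ⟶ Y, ∀ w : U.obj (Z ⨯ X),
    U.map h w = U.map (f (U.map prod.fst w)) (U.map prod.snd w)

/-- If `U` is faithful and preserves binary products, then the pointwise composite of two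
generalized elements is a generalized element, and constant identity functions are
generalized elements: the hom-sets of `C` are enriched in presheaves of generalized
elements. -/
theorem isGenElt_mu_and_unit (U : C ⥤ Type w) [U.Faithful]
    (hU : ∀ Z X : C, Function.Bijective
      (fun w : U.obj (Z ⨯ X) => (U.map prod.fst w, U.map prod.snd w)))
    {W X Y Z : C} (f : U.obj W → (Y ⟶ Z)) (g : U.obj W → (X ⟶ Y))
    (hf : IsGenElt U f) (hg : IsGenElt U g) :
    IsGenElt U (fun w => g w ≫ f w) ∧
    ∀ X' : C, IsGenElt U (fun _ : U.obj W => 𝟙 X') := by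
  constructor
  · obtain ⟨hf', Hf⟩ := hf
    obtain ⟨hg', Hg⟩ := hg
    refine ⟨prod.lift prod.fst hg' ≫ hf', fun w => ?_⟩
    have h1 : U.map prod.fst (U.map (prod.lift prod.fst hg') w) = U.map prod.fst w := by
      rw [← FunctorToTypes.map_comp_apply, prod.lift_fst]
    have h2 : U.map prod.snd (U.map (prod.lift prod.fst hg') w) = U.map hg' w := by
      rw [← FunctorToTypes.map_comp_apply, prod.lift_snd]
    rw [FunctorToTypes.map_comp_apply, Hf, h1, h2, Hg, FunctorToTypes.map_comp_apply]
  · intro X'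
    exact ⟨prod.snd, fun w => by simp⟩
end

section
/- Let p : 𝐄 ⥤ 𝐁 be a structure on 𝐁 (faithful, lifting isomorphisms, with skeletal fibers), G a group, B an object of 𝐁, ρ : G →* Aut(B) a group homomorphism, and E an object with p(E) = B. Suppose σ : G → (E ⟶ E) is a function such that for every g ∈ G, σ(g) is a cartesian lift of (ρ(g)).hom (so p(σ(g)) = (ρ(g)).hom). Then each σ(g) is an isomorphism, σ(1) = 𝟙 E, and σ(g * h) = σ(h) ≫ σ(g) for all g, h ∈ G (where Aut(B) is a group with (ρ(g*h)).hom = (ρ(h)).hom ≫ (ρ(g)).hom); hence σ determines a group homomorphism G →* Aut(E) lifting ρ, i.e. the G-action ρ on B lifts to a G-action on E. -/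
open CategoryTheory

universe v₁ u₁ v₂ u₂

variable {𝒳 : Type u₁} {𝒮 : Type u₂} [Category.{v₁} 𝒳] [Category.{v₂} 𝒮]

/-- `φ : e' ⟶ e` is a (strongly) cartesian lift of `f : b' ⟶ p.obj e`, where the
equality `p.obj e' = b'` is witnessed by `h`. -/
def IsCartesianLift (p : 𝒳 ⥤ 𝒮) {e' e : 𝒳} {b' : 𝒮} (h : p.obj e' = b')
    (f : b' ⟶ p.obj e) (φ : e' ⟶ e) : Prop :=
  p.map φ = eqToHom h ≫ f ∧
    ∀ (e'' : 𝒳) (ψ : e'' ⟶ e) (g : p.obj e'' ⟶ b'), p.map ψ = g ≫ f →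
      ∃! χ : e'' ⟶ e', (p.map χ = g ≫ eqToHom h.symm ∧ ψ = χ ≫ φ)

/-- For a structure `p` on `𝒮`, a `G`-action `ρ` on `B = p(E)`, and a choice `σ g` of a
cartesian lift of `(ρ g).hom` with domain and codomain `E`, the lifts are isomorphisms,
`σ 1 = 𝟙 E`, `σ (g * h) = σ h ≫ σ g`, and they assemble into a group homomorphism
`G →* Aut E` lifting `ρ`. -/
theorem cartesian_lift_of_group_action (p : 𝒳 ⥤ 𝒮) (hp : IsCatStruct p)
    {G : Type*} [Group G] (E : 𝒳) (ρ : G →* Aut (p.obj E))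
    (σ : G → (E ⟶ E))
    (hσ : ∀ g : G, IsCartesianLift p (e' := E) (e := E) rfl (ρ g).hom (σ g)) :
    (∀ g : G, IsIso (σ g)) ∧
    σ 1 = 𝟙 E ∧
    (∀ g h : G, σ (g * h) = σ h ≫ σ g) ∧
    ∃ ρ'' : G →* Aut E,
      (∀ g : G, (ρ'' g).hom = σ g) ∧ ∀ g : G, p.map (ρ'' g).hom = (ρ g).hom := by
  have hmap : ∀ g : G, p.map (σ g) = (ρ g).hom := fun g => by
    simpa using (hσ g).1
  have hone : σ 1 = 𝟙 E := by
    apply hp.faithful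
    rw [hmap, map_one, p.map_id]
    rfl
  have hmul : ∀ g h : G, σ (g * h) = σ h ≫ σ g := fun g h => by
    apply hp.faithful
    rw [hmap, p.map_comp, hmap, hmap, map_mul, Aut.Aut_mul_def]
    rfl
  have hiso : ∀ g : G, IsIso (σ g) := fun g => by
    refine ⟨σ g⁻¹, ?_, ?_⟩
    · rw [← hmul, inv_mul_cancel, hone]
    · rw [← hmul, mul_inv_cancel, hone]
  refine ⟨hiso, hone, hmul, ?_⟩
  refine ⟨{ toFun := fun g => ⟨σ g, σ g⁻¹, ?_, ?_⟩, map_one' := ?_, map_mul' := ?_ }, ?_, ?_⟩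
  · rw [← hmul, inv_mul_cancel, hone]
  · rw [← hmul, mul_inv_cancel, hone]
  · apply Iso.ext; exact hone
  · intro g h
    apply Iso.ext
    exact hmul g h
  · intro g; rfl
  · intro g; exact hmap g
end

section
/- Let 𝐂 be a category with a terminal object and binary products, G a group object in 𝐂 with inverse inv : G ⟶ G, ρ : G ⨯ X ⟶ X an action on X, and i : Y ⟶ X a monomorphism. Let x : Z ⟶ G stabilize Y with witness ρₓ : Z ⨯ Y ⟶ Y, and suppose ρₓ is surjective in the second argument: for every object T and every t : T ⟶ Z, the map Hom_𝐂(T, Y) → Hom_𝐂(T, Y), s ↦ prod.lift t s ≫ ρₓ, is surjective. Then x ≫ inv : Z ⟶ G also stabilizes Y, i.e. there exists ρ' : Z ⨯ Y ⟶ Y with prod.map (x ≫ inv) i ≫ ρ = ρ' ≫ i. -/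
open CategoryTheory CategoryTheory.Limits

universe v u

variable {C : Type u} [Category.{v} C] [HasTerminal C] [HasBinaryProducts C]

/-- A group object structure on `G`. -/
structure IsGroupObject {G : C} (m : (G ⨯ G : C) ⟶ G) (e : (⊤_ C) ⟶ G)
    (inv : G ⟶ G) : Prop where
  mul_assoc : prod.map m (𝟙 G) ≫ m = (prod.associator G G G).hom ≫ prod.map (𝟙 G) m ≫ m
  one_mul : prod.lift (terminal.from G ≫ e) (𝟙 G) ≫ m = 𝟙 G
  mul_one : prod.lift (𝟙 G) (terminal.from G ≫ e) ≫ m = 𝟙 G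
  mul_inv : prod.lift (𝟙 G) inv ≫ m = terminal.from G ≫ e
  inv_mul : prod.lift inv (𝟙 G) ≫ m = terminal.from G ≫ e

/-- `ρ : G ⨯ X ⟶ X` is an action of the group object `G` on `X`. -/
structure IsAction {G X : C} (m : (G ⨯ G : C) ⟶ G) (e : (⊤_ C) ⟶ G)
    (ρ : (G ⨯ X : C) ⟶ X) : Prop where
  assoc : prod.map m (𝟙 X) ≫ ρ = (prod.associator G G X).hom ≫ prod.map (𝟙 G) ρ ≫ ρ
  unit : prod.map e (𝟙 X) ≫ ρ = prod.snd

/-- If `x : Z ⟶ G` stabilizes `Y` with a witness `ρₓ` that is surjective in the second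
argument, then `x ≫ inv` also stabilizes `Y`. -/
theorem stabilizes_inv {G X Y : C}
    (m : (G ⨯ G : C) ⟶ G) (e : (⊤_ C) ⟶ G) (inv : G ⟶ G)
    (hG : IsGroupObject m e inv)
    (ρ : (G ⨯ X : C) ⟶ X) (hρ : IsAction m e ρ)
    (i : Y ⟶ X) [Mono i]
    {Z : C} (x : Z ⟶ G) (ρx : (Z ⨯ Y : C) ⟶ Y)
    (hx : prod.map x i ≫ ρ = ρx ≫ i)
    (hsurj : ∀ (T : C) (t : T ⟶ Z),
      Function.Surjective (fun s : T ⟶ Y => prod.lift t s ≫ ρx)) :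
    ∃ ρ' : (Z ⨯ Y : C) ⟶ Y, prod.map (x ≫ inv) i ≫ ρ = ρ' ≫ i := by
  -- generalized-element form of the action axioms
  have act_assoc : ∀ {T : C} (g h : T ⟶ G) (y : T ⟶ X),
      prod.lift g (prod.lift h y ≫ ρ) ≫ ρ = prod.lift (prod.lift g h ≫ m) y ≫ ρ := by
    intro T g h y
    have h1 := congrArg (fun f => prod.lift (prod.lift g h) y ≫ f) hρ.assoc
    simp only [prod.lift_map_assoc, Category.comp_id, prod.associator_hom,
      prod.comp_lift_assoc, Category.assoc, prod.lift_fst, prod.lift_snd,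
      prod.lift_fst_assoc, prod.lift_snd_assoc] at h1
    exact h1.symm
  have act_unit : ∀ {T : C} (w : T ⟶ (⊤_ C)) (y : T ⟶ X),
      prod.lift (w ≫ e) y ≫ ρ = y := by
    intro T w y
    have := congrArg (fun f => prod.lift w y ≫ f) hρ.unit
    simpa using this.trans (prod.lift_snd w y)
  -- obtain a "section" s of ρx over prod.fst
  obtain ⟨s, hs⟩ := hsurj (Z ⨯ Y) prod.fst prod.snd
  simp only at hs
  refine ⟨s, ?_⟩
  have key : prod.lift (prod.fst ≫ x) (s ≫ i) ≫ ρ = prod.snd ≫ i := by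
    have : prod.lift prod.fst s ≫ prod.map x i ≫ ρ = prod.snd ≫ i := by
      rw [hx, reassoc_of% hs]
    simpa using this
  have inv_mul' : prod.lift ((prod.fst ≫ x) ≫ inv) (prod.fst ≫ x) ≫ m
      = terminal.from (Z ⨯ Y) ≫ e := by
    have := congrArg (fun f => (prod.fst ≫ x : (Z ⨯ Y : C) ⟶ G) ≫ f) hG.inv_mul
    simp only [prod.comp_lift_assoc, Category.comp_id] at this
    rw [this]
    rw [← Category.assoc, Subsingleton.elim ((prod.fst ≫ x) ≫ terminal.from G)
      (terminal.from (Z ⨯ Y))]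
  calc prod.map (x ≫ inv) i ≫ ρ
      = prod.lift ((prod.fst ≫ x) ≫ inv) (prod.snd ≫ i) ≫ ρ := by
        congr 1; apply Limits.prod.hom_ext <;> simp
    _ = prod.lift ((prod.fst ≫ x) ≫ inv) (prod.lift (prod.fst ≫ x) (s ≫ i) ≫ ρ) ≫ ρ := by
        rw [key]
    _ = prod.lift (prod.lift ((prod.fst ≫ x) ≫ inv) (prod.fst ≫ x) ≫ m) (s ≫ i) ≫ ρ :=
        act_assoc _ _ _
    _ = s ≫ i := by rw [inv_mul']; exact act_unit _ _
end
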